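/- Let D be a finite digraph and let S be an absorbing set of D of minimum cardinality. Then no vertex of D absorbs two distinct vertices of S. Consequently, every minimum-size absorbing set of D is a multipacking, and the multipacking number of D is at least the minimum size of an absorbing set of D. -/

import Mathlib

open scoped Classical

/-- `HasPath A k u v` means there is a directed walk of length `k` from `u` to `v`
in the digraph with arc relation `A`. -/
def HasPath {V : Type*} (A : V → V → Prop) : ℕ → V → V → Prop
  | 0, u, v => u = v
  | (n+1), u, v => ∃ w, A u w ∧ HasPath A n w v

/-- The directed distance from `u` to `v` (in `ℕ∞`, `⊤` meaning no directed path exists). -/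
noncomputable def ddist {V : Type*} (A : V → V → Prop) (u v : V) : ℕ∞ :=
  sInf {n : ℕ∞ | ∃ k : ℕ, n = (k : ℕ∞) ∧ HasPath A k u v}

/-- `f : V → ℕ` is a dominating broadcast: every vertex `v` is within directed
distance `f t` of some vertex `t` with `f t ≥ 1`. -/
def IsDomBroadcast {V : Type*} (A : V → V → Prop) (f : V → ℕ) : Prop :=
  ∀ v : V, ∃ t : V, 1 ≤ f t ∧ ddist A t v ≤ (f t : ℕ∞)

/-- The cost of a broadcast. -/
def cost {V : Type*} [Fintype V] (f : V → ℕ) : ℕ := ∑ v, f v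

/-- The broadcast domination number `γ_b`. -/
noncomputable def gammaB {V : Type*} [Fintype V] (A : V → V → Prop) : ℕ :=
  sInf {c : ℕ | ∃ f : V → ℕ, IsDomBroadcast A f ∧ cost f = c}

/-- `S` is a multipacking: for every vertex `v` and every `e ≥ 1`, at most `e`
vertices of `S` are at directed distance at most `e` from `v`. -/
noncomputable def IsMultipacking {V : Type*} [Fintype V] (A : V → V → Prop) (S : Finset V) : Prop :=
  ∀ v : V, ∀ e : ℕ, 1 ≤ e → (S.filter (fun u => ddist A v u ≤ (e : ℕ∞))).card ≤ e

/-- The multipacking number `mp`. -/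
noncomputable def mpNum {V : Type*} [Fintype V] (A : V → V → Prop) : ℕ :=
  sSup {c : ℕ | ∃ S : Finset V, IsMultipacking A S ∧ S.card = c}

/-- S ⊆ V is absorbing if every vertex of the digraph is reachable by a directed
path from some vertex of S. -/
def IsAbsorbing {V : Type*} (A : V → V → Prop) (S : Finset V) : Prop :=
  ∀ v : V, ∃ u ∈ S, ddist A u v ≠ ⊤

lemma hasPath_trans {V : Type*} {A : V → V → Prop} :
    ∀ {k m : ℕ} {u v w : V}, HasPath A k u v → HasPath A m v w → HasPath A (k + m) u w := by
  intro k
  induction k with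
  | zero => intro m u v w h1 h2; cases h1; simpa using h2
  | succ n ih =>
    intro m u v w h1 h2
    obtain ⟨x, hax, hx⟩ := h1
    rw [Nat.succ_add]; exact ⟨x, hax, ih hx h2⟩

lemma ddist_ne_top_iff {V : Type*} {A : V → V → Prop} {u v : V} :
    ddist A u v ≠ ⊤ ↔ ∃ k : ℕ, HasPath A k u v := by
  constructor
  · intro h
    by_contra hn
    push_neg at hn
    apply h
    unfold ddist
    refine (congrArg sInf (?_ : _ = (∅ : Set ℕ∞))).trans sInf_empty
    ext n
    simp only [Set.mem_setOf_eq, Set.mem_empty_iff_false, iff_false]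
    rintro ⟨k, _, hk⟩
    exact hn k hk
  · rintro ⟨k, hk⟩ htop
    have : ddist A u v ≤ (k : ℕ∞) := sInf_le ⟨k, rfl, hk⟩
    rw [htop] at this
    simp at this

lemma ddist_trans_ne_top {V : Type*} {A : V → V → Prop} {u v w : V}
    (h1 : ddist A u v ≠ ⊤) (h2 : ddist A v w ≠ ⊤) : ddist A u w ≠ ⊤ := by
  rw [ddist_ne_top_iff] at *
  obtain ⟨k, hk⟩ := h1
  obtain ⟨m, hm⟩ := h2
  exact ⟨k + m, hasPath_trans hk hm⟩

/-- No vertex absorbs two distinct vertices of a minimum-size absorbing set;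
consequently such a set is a multipacking and mp(D) is at least its size. -/
theorem stmt_15 {V : Type*} [Fintype V] (A : V → V → Prop) (hirr : ∀ v, ¬ A v v)
    (S : Finset V) (habs : IsAbsorbing A S)
    (hmin : ∀ S' : Finset V, IsAbsorbing A S' → S.card ≤ S'.card) :
    (∀ w u v : V, u ∈ S → v ∈ S →
        ddist A w u ≠ ⊤ → ddist A w v ≠ ⊤ → u = v) ∧
      IsMultipacking A S ∧ S.card ≤ mpNum A := by
  have key : ∀ w u v : V, u ∈ S → v ∈ S →
      ddist A w u ≠ ⊤ → ddist A w v ≠ ⊤ → u = v := by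
    intro w u v hu hv hwu hwv
    by_contra hne
    set S' := insert w ((S.erase u).erase v) with hS'
    have habs' : IsAbsorbing A S' := by
      intro x
      obtain ⟨t, ht, htx⟩ := habs x
      by_cases htu : t = u
      · exact ⟨w, Finset.mem_insert_self _ _, ddist_trans_ne_top hwu (htu ▸ htx)⟩
      by_cases htv : t = v
      · exact ⟨w, Finset.mem_insert_self _ _, ddist_trans_ne_top hwv (htv ▸ htx)⟩
      · exact ⟨t, Finset.mem_insert_of_mem (Finset.mem_erase.2 ⟨htv, Finset.mem_erase.2 ⟨htu, ht⟩⟩), htx⟩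
    have hcard : S'.card < S.card := by
      have h1 : ((S.erase u).erase v).card = S.card - 1 - 1 := by
        rw [Finset.card_erase_of_mem (Finset.mem_erase.2 ⟨fun h => hne h.symm, hv⟩),
          Finset.card_erase_of_mem hu]
      have h2 : S'.card ≤ ((S.erase u).erase v).card + 1 := Finset.card_insert_le _ _
      have h3 : 2 ≤ S.card := by
        have : ({u, v} : Finset V) ⊆ S := by
          intro x hx
          rcases Finset.mem_insert.1 hx with h | h
          · exact h ▸ hu
          · exact (Finset.mem_singleton.1 h) ▸ hv
        calc 2 = ({u, v} : Finset V).card := (Finset.card_pair hne).symm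
          _ ≤ S.card := Finset.card_le_card this
      omega
    exact absurd (hmin S' habs') (not_le.2 hcard)
  have hmp : IsMultipacking A S := by
    intro v e he
    have : (S.filter (fun u => ddist A v u ≤ (e : ℕ∞))).card ≤ 1 := by
      apply Finset.card_le_one.2
      intro a ha b hb
      rw [Finset.mem_filter] at ha hb
      exact key v a b ha.1 hb.1 (ne_top_of_le_ne_top (by simp) ha.2)
        (ne_top_of_le_ne_top (by simp) hb.2)
    omega
  refine ⟨key, hmp, ?_⟩
  apply le_csSup
  · refine ⟨Fintype.card V, ?_⟩
    rintro c ⟨T, _, rfl⟩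
    exact T.card_le_univ
  · exact ⟨S, hmp, rfl⟩
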